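/- Let r : ℝ → ℝ be a nonnegative integrable function with ∫ r = 1, let a, b > 0, and α ∈ ℝ. Then the operator T on L²(ℝ) defined by (Tf)(x) = √(ab) ∫ r(α − a x − b y^{−1}) |y|^{−1} f(y) dy satisfies ‖Tf‖₂ ≤ ‖f‖₂ for all f ∈ L²(ℝ). -/

import Mathlib

open MeasureTheory Set
open scoped ENNReal

-- affine lemmas
lemma aux_affine_integrable {r : ℝ → ℝ} (hint : Integrable r) {a' : ℝ} (ha' : a' ≠ 0) (c : ℝ) :
    Integrable (fun x => r (c - a' * x)) := by
  simpa using (hint.comp_sub_left c).comp_mul_left' ha'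

lemma aux_affine_integral (r : ℝ → ℝ) (c : ℝ) {a' : ℝ} (ha' : 0 < a') :
    ∫ x, r (c - a' * x) = a'⁻¹ * ∫ t, r t := by
  have h := Measure.integral_comp_mul_left (fun t => r (c - t)) a'
  simp only [smul_eq_mul] at h
  rw [h, integral_sub_left_eq_self r volume c, abs_of_pos (inv_pos.2 ha')]

-- lintegral affine
lemma aux_affine_lintegral {r : ℝ → ℝ} (hmeas : Measurable r) (hnonneg : ∀ x, 0 ≤ r x)
    (hint : Integrable r) (hnorm : ∫ x, r x = 1) (c : ℝ) {a' : ℝ} (ha' : 0 < a') :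
    ∫⁻ x, ENNReal.ofReal (r (c - a' * x)) = ENNReal.ofReal a'⁻¹ := by
  rw [← ofReal_integral_eq_lintegral_ofReal (aux_affine_integrable hint ha'.ne' c)
    (Filter.Eventually.of_forall fun x => hnonneg _)]
  rw [aux_affine_integral r c ha', hnorm, mul_one]

lemma aux_inv_image_Ioi : Inv.inv '' (Ioi (0:ℝ)) = Ioi 0 := by
  ext y
  constructor
  · rintro ⟨x, hx, rfl⟩; exact mem_Ioi.2 (inv_pos.2 (mem_Ioi.1 hx))
  · intro hy; exact ⟨y⁻¹, mem_Ioi.2 (inv_pos.2 (mem_Ioi.1 hy)), inv_inv y⟩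

lemma aux_inv_image_Iio : Inv.inv '' (Iio (0:ℝ)) = Iio 0 := by
  ext y
  simp only [Set.mem_image, Set.mem_Iio]
  constructor
  · rintro ⟨x, hx, rfl⟩; exact inv_lt_zero.2 hx
  · intro hy; exact ⟨y⁻¹, inv_lt_zero.2 hy, inv_inv y⟩

lemma aux_key : ∀ (φ : ℝ → ℝ) (y : ℝ), |(-(y^2)⁻¹)| • φ y⁻¹ = φ y⁻¹ * (y⁻¹)^2 := by
  intro φ y
  rw [smul_eq_mul, mul_comm, abs_neg, abs_inv, abs_of_nonneg (sq_nonneg y), ← inv_pow]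

lemma aux_inversion {φ : ℝ → ℝ} (hφ : Integrable φ) :
    Integrable (fun y => φ y⁻¹ * (y⁻¹)^2) ∧ (∫ y, φ y⁻¹ * (y⁻¹)^2) = ∫ u, φ u := by
  have hderivP : ∀ x ∈ Ioi (0:ℝ), HasDerivWithinAt Inv.inv (-(x^2)⁻¹) (Ioi 0) x :=
    fun x hx => (hasDerivAt_inv (ne_of_gt hx)).hasDerivWithinAt
  have hderivN : ∀ x ∈ Iio (0:ℝ), HasDerivWithinAt Inv.inv (-(x^2)⁻¹) (Iio 0) x :=
    fun x hx => (hasDerivAt_inv (ne_of_lt hx)).hasDerivWithinAt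
  have hinj : Set.InjOn (Inv.inv : ℝ → ℝ) (Ioi (0:ℝ)) := inv_injective.injOn
  have hinj2 : Set.InjOn (Inv.inv : ℝ → ℝ) (Iio (0:ℝ)) := inv_injective.injOn
  have hfun : (fun y : ℝ => |(-(y^2)⁻¹)| • φ y⁻¹) = fun y => φ y⁻¹ * (y⁻¹)^2 :=
    funext (aux_key φ)
  have hionP : IntegrableOn (fun y => φ y⁻¹ * (y⁻¹)^2) (Ioi 0) := by
    rw [← hfun]
    exact (integrableOn_image_iff_integrableOn_abs_deriv_smul measurableSet_Ioi hderivP hinj φ).mp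
      (aux_inv_image_Ioi ▸ hφ.integrableOn)
  have hionN : IntegrableOn (fun y => φ y⁻¹ * (y⁻¹)^2) (Iio 0) := by
    rw [← hfun]
    exact (integrableOn_image_iff_integrableOn_abs_deriv_smul measurableSet_Iio hderivN hinj2 φ).mp
      (aux_inv_image_Iio ▸ hφ.integrableOn)
  have hintP : ∫ u in Ioi (0:ℝ), φ u = ∫ y in Ioi (0:ℝ), φ y⁻¹ * (y⁻¹)^2 := by
    rw [← hfun, ← integral_image_eq_integral_abs_deriv_smul measurableSet_Ioi hderivP hinj φ,
      aux_inv_image_Ioi]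
  have hintN : ∫ u in Iio (0:ℝ), φ u = ∫ y in Iio (0:ℝ), φ y⁻¹ * (y⁻¹)^2 := by
    rw [← hfun, ← integral_image_eq_integral_abs_deriv_smul measurableSet_Iio hderivN hinj2 φ,
      aux_inv_image_Iio]
  have hrestrict : (volume : Measure ℝ).restrict ({(0:ℝ)}ᶜ) = volume := by
    rw [Measure.restrict_congr_set (t := Set.univ), Measure.restrict_univ]
    rw [ae_eq_univ, compl_compl]
    exact measure_singleton 0
  have hunion : Iio (0:ℝ) ∪ Ioi 0 = ({(0:ℝ)}ᶜ) := Set.Iio_union_Ioi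
  have hdisj : Disjoint (Iio (0:ℝ)) (Ioi 0) := by
    exact (Set.Iio_disjoint_Ici le_rfl).mono_right Set.Ioi_subset_Ici_self
  have hintble : Integrable (fun y => φ y⁻¹ * (y⁻¹)^2) := by
    have h := hionN.union hionP
    rw [hunion] at h
    unfold IntegrableOn at h
    rwa [hrestrict] at h
  refine ⟨hintble, ?_⟩
  have split : ∀ (g : ℝ → ℝ), Integrable g →
      (∫ y, g y) = (∫ y in Iio (0:ℝ), g y) + ∫ y in Ioi (0:ℝ), g y := by
    intro g hg
    rw [← setIntegral_union hdisj measurableSet_Ioi hg.integrableOn hg.integrableOn, hunion,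
      setIntegral_congr_set (by rw [ae_eq_univ, compl_compl]; exact measure_singleton 0),
      setIntegral_univ]
  rw [split _ hintble, split _ hφ, hintP, hintN]

lemma aux_CS {P Q : ℝ → ℝ≥0∞} (hP : AEMeasurable P) (hQ : AEMeasurable Q) :
    (∫⁻ y, P y * Q y) ^ 2 ≤ (∫⁻ y, (P y)^2) * (∫⁻ y, (Q y)^2) := by
  have hpq : (2:ℝ).HolderConjugate 2 := Real.HolderConjugate.two_two
  have h := ENNReal.lintegral_mul_le_Lp_mul_Lq volume hpq hP hQ
  simp only [Pi.mul_apply] at h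
  calc (∫⁻ y, P y * Q y) ^ 2
      ≤ ((∫⁻ a, P a ^ (2:ℝ)) ^ (1/(2:ℝ)) * (∫⁻ a, Q a ^ (2:ℝ)) ^ (1/(2:ℝ)))^2 := by
        exact pow_le_pow_left' h 2
    _ = (∫⁻ y, (P y)^2) * (∫⁻ y, (Q y)^2) := by
        rw [mul_pow, ← ENNReal.rpow_natCast (_ ^ (1/(2:ℝ))), ← ENNReal.rpow_natCast (_ ^ (1/(2:ℝ))),
          ← ENNReal.rpow_mul, ← ENNReal.rpow_mul]
        norm_num

lemma aux_half (x : ℝ≥0∞) : x ^ (1/2:ℝ) * x ^ (1/2:ℝ) = x := by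
  rw [← pow_two, ← ENNReal.rpow_natCast, ← ENNReal.rpow_mul]
  norm_num

theorem aux_main
    (r : ℝ → ℝ) (hmeas : Measurable r) (hnonneg : ∀ x, 0 ≤ r x)
    (hint : Integrable r) (hnorm : ∫ x, r x = 1)
    (a b α : ℝ) (ha : 0 < a) (hb : 0 < b)
    (f : ℝ → ℝ) (hfm : Measurable f) (hf : MeasureTheory.MemLp f 2 (volume : Measure ℝ)) :
    (∫ x : ℝ, (Real.sqrt (a * b) * ∫ y : ℝ, r (α - a * x - b * y⁻¹) * |y|⁻¹ * f y) ^ 2)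
      ≤ ∫ y : ℝ, (f y) ^ 2 := by
  have hab : (0:ℝ) ≤ a * b := mul_nonneg ha.le hb.le
  set J := ∫ y : ℝ, (f y)^2 with hJdef
  have hJ0 : 0 ≤ J := integral_nonneg fun y => sq_nonneg _
  have hfsq : Integrable (fun y => (f y)^2) := hf.integrable_sq
  -- measurability of the parametric integral
  have hprod : Measurable (fun p : ℝ × ℝ => r (α - a * p.1 - b * p.2⁻¹) * |p.2|⁻¹ * f p.2) :=
    ((hmeas.comp ((measurable_const.sub ((measurable_fst).const_mul a)).sub
      ((measurable_snd.inv).const_mul b))).mul ((measurable_snd.abs).inv)).mul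
      (hfm.comp measurable_snd)
  have hmI : StronglyMeasurable fun x : ℝ => ∫ y : ℝ, r (α - a * x - b * y⁻¹) * |y|⁻¹ * f y :=
    hprod.stronglyMeasurable.integral_prod_right'
  -- pointwise bound
  have key : ∀ x : ℝ,
      ENNReal.ofReal ((Real.sqrt (a*b) * ∫ y : ℝ, r (α - a * x - b * y⁻¹) * |y|⁻¹ * f y) ^ 2)
      ≤ ENNReal.ofReal (a*b) * (ENNReal.ofReal (1/b) *
          ∫⁻ y : ℝ, ENNReal.ofReal (r (α - a * x - b * y⁻¹)) * ENNReal.ofReal ((f y)^2)) := by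
    intro x
    set c := α - a * x with hc
    set I := ∫ y : ℝ, r (c - b * y⁻¹) * |y|⁻¹ * f y with hI
    set G := fun y : ℝ => r (c - b * y⁻¹) * |y|⁻¹ * |f y| with hG
    have hWm : Measurable fun y : ℝ => r (c - b * y⁻¹) :=
      hmeas.comp (measurable_const.sub (measurable_inv.const_mul b))
    have hGnn : ∀ y, 0 ≤ G y := fun y =>
      mul_nonneg (mul_nonneg (hnonneg _) (inv_nonneg.2 (abs_nonneg _))) (abs_nonneg _)
    have hGm : Measurable G := (hWm.mul (measurable_abs.inv)).mul hfm.abs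
    have habs : |I| ≤ ∫ y, G y := by
      calc |I| = ‖I‖ := (Real.norm_eq_abs I).symm
        _ ≤ ∫ y, ‖r (c - b * y⁻¹) * |y|⁻¹ * f y‖ := norm_integral_le_integral_norm _
        _ = ∫ y, G y := by
            congr 1; funext y
            rw [Real.norm_eq_abs, abs_mul, abs_mul, abs_of_nonneg (hnonneg _), abs_inv, abs_abs]
    have h1 : ENNReal.ofReal (I^2) ≤ (∫⁻ y, ENNReal.ofReal (G y))^2 := by
      have e1 : ENNReal.ofReal (I^2) ≤ ENNReal.ofReal ((∫ y, G y)^2) := by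
        apply ENNReal.ofReal_le_ofReal
        rw [← sq_abs I]
        exact pow_le_pow_left₀ (abs_nonneg I) habs 2
      refine e1.trans ?_
      rw [ENNReal.ofReal_pow (integral_nonneg hGnn)]
      apply pow_le_pow_left' ?_ 2
      rw [integral_eq_lintegral_of_nonneg_ae (Filter.Eventually.of_forall hGnn)
        hGm.aestronglyMeasurable]
      exact ENNReal.ofReal_toReal_le
    set W := fun y : ℝ => ENNReal.ofReal (r (c - b * y⁻¹)) with hW
    set P := fun y : ℝ => W y ^ (1/2:ℝ) * ENNReal.ofReal |y|⁻¹ with hP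
    set Q := fun y : ℝ => W y ^ (1/2:ℝ) * ENNReal.ofReal |f y| with hQ
    have hsplit : ∀ y, ENNReal.ofReal (G y) = P y * Q y := by
      intro y
      rw [hP, hQ, mul_mul_mul_comm, aux_half]
      rw [hG, ENNReal.ofReal_mul (mul_nonneg (hnonneg _) (inv_nonneg.2 (abs_nonneg _))),
        ENNReal.ofReal_mul (hnonneg _), mul_assoc]
    have hhalf2 : ∀ z : ℝ≥0∞, (z ^ (1/2:ℝ))^2 = z := fun z => by
      rw [← ENNReal.rpow_natCast (z ^ (1/2:ℝ)) 2, ← ENNReal.rpow_mul]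
      norm_num
    have hPsq : ∀ y, P y ^ 2 = W y * ENNReal.ofReal ((y⁻¹)^2) := by
      intro y
      rw [hP, mul_pow, hhalf2]
      congr 1
      rw [← ENNReal.ofReal_pow (inv_nonneg.2 (abs_nonneg _)), ← abs_inv, sq_abs]
    have hQsq : ∀ y, Q y ^ 2 = W y * ENNReal.ofReal ((f y)^2) := by
      intro y
      rw [hQ, mul_pow, hhalf2]
      congr 1
      rw [← ENNReal.ofReal_pow (abs_nonneg _), sq_abs]
    have hPm : AEMeasurable P := ((hWm.ennreal_ofReal.pow_const _).mul
      (measurable_abs.inv.ennreal_ofReal)).aemeasurable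
    have hQm : AEMeasurable Q := ((hWm.ennreal_ofReal.pow_const _).mul
      (hfm.abs.ennreal_ofReal)).aemeasurable
    have hCS : (∫⁻ y, ENNReal.ofReal (G y))^2
        ≤ (∫⁻ y, W y * ENNReal.ofReal ((y⁻¹)^2)) * (∫⁻ y, W y * ENNReal.ofReal ((f y)^2)) := by
      calc (∫⁻ y, ENNReal.ofReal (G y))^2 = (∫⁻ y, P y * Q y)^2 := by
            congr 1; exact lintegral_congr fun y => hsplit y
        _ ≤ (∫⁻ y, (P y)^2) * (∫⁻ y, (Q y)^2) := aux_CS hPm hQm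
        _ = _ := by rw [lintegral_congr hPsq, lintegral_congr hQsq]
    have hfac1 : ∫⁻ y, W y * ENNReal.ofReal ((y⁻¹)^2) = ENNReal.ofReal (1/b) := by
      have hφ : Integrable (fun u => r (c - b * u)) := aux_affine_integrable hint hb.ne' c
      obtain ⟨hψint, hψeq⟩ := aux_inversion hφ
      have hval : ∫ y, r (c - b * y⁻¹) * (y⁻¹)^2 = 1/b := by
        rw [hψeq, aux_affine_integral r c hb, hnorm, mul_one, one_div]
      calc ∫⁻ y, W y * ENNReal.ofReal ((y⁻¹)^2)
          = ∫⁻ y, ENNReal.ofReal (r (c - b * y⁻¹) * (y⁻¹)^2) := by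
            exact lintegral_congr fun y => (ENNReal.ofReal_mul (hnonneg _)).symm
        _ = ENNReal.ofReal (∫ y, r (c - b * y⁻¹) * (y⁻¹)^2) := by
            rw [ofReal_integral_eq_lintegral_ofReal hψint
              (Filter.Eventually.of_forall fun y => mul_nonneg (hnonneg _) (sq_nonneg _))]
        _ = ENNReal.ofReal (1/b) := by rw [hval]
    calc ENNReal.ofReal ((Real.sqrt (a*b) * I) ^ 2)
        = ENNReal.ofReal (a*b) * ENNReal.ofReal (I^2) := by
          rw [mul_pow, Real.sq_sqrt hab, ENNReal.ofReal_mul hab]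
      _ ≤ ENNReal.ofReal (a*b) * ((∫⁻ y, ENNReal.ofReal (G y))^2) := by
          exact mul_le_mul_right h1 _
      _ ≤ ENNReal.ofReal (a*b) * ((∫⁻ y, W y * ENNReal.ofReal ((y⁻¹)^2)) *
            (∫⁻ y, W y * ENNReal.ofReal ((f y)^2))) := mul_le_mul_right hCS _
      _ = ENNReal.ofReal (a*b) * (ENNReal.ofReal (1/b) *
            ∫⁻ y, W y * ENNReal.ofReal ((f y)^2)) := by rw [hfac1]
  -- outer chain
  have hms : AEStronglyMeasurable
      (fun x : ℝ => (Real.sqrt (a*b) * ∫ y : ℝ, r (α - a * x - b * y⁻¹) * |y|⁻¹ * f y) ^ 2)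
      volume := ((hmI.measurable.const_mul _).pow_const 2).aestronglyMeasurable
  have hWprod : Measurable (Function.uncurry fun x y : ℝ =>
      ENNReal.ofReal (r (α - a * x - b * y⁻¹)) * ENNReal.ofReal ((f y)^2)) :=
    ((hmeas.comp ((measurable_const.sub ((measurable_fst).const_mul a)).sub
      ((measurable_snd.inv).const_mul b))).ennreal_ofReal).mul
      (((hfm.comp measurable_snd).pow_const 2).ennreal_ofReal)
  have htot : (∫⁻ x : ℝ, ENNReal.ofReal
      ((Real.sqrt (a*b) * ∫ y : ℝ, r (α - a * x - b * y⁻¹) * |y|⁻¹ * f y) ^ 2))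
      ≤ ENNReal.ofReal J := by
    calc (∫⁻ x : ℝ, ENNReal.ofReal
        ((Real.sqrt (a*b) * ∫ y : ℝ, r (α - a * x - b * y⁻¹) * |y|⁻¹ * f y) ^ 2))
        ≤ ∫⁻ x : ℝ, ENNReal.ofReal (a*b) * (ENNReal.ofReal (1/b) *
            ∫⁻ y : ℝ, ENNReal.ofReal (r (α - a * x - b * y⁻¹)) * ENNReal.ofReal ((f y)^2)) :=
          lintegral_mono key
      _ = ENNReal.ofReal (a*b) * (ENNReal.ofReal (1/b) *
            ∫⁻ x : ℝ, ∫⁻ y : ℝ, ENNReal.ofReal (r (α - a * x - b * y⁻¹)) *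
              ENNReal.ofReal ((f y)^2)) := by
          rw [lintegral_const_mul' _ _ ENNReal.ofReal_ne_top,
            lintegral_const_mul' _ _ ENNReal.ofReal_ne_top]
      _ = ENNReal.ofReal (a*b) * (ENNReal.ofReal (1/b) *
            ∫⁻ y : ℝ, ∫⁻ x : ℝ, ENNReal.ofReal (r (α - a * x - b * y⁻¹)) *
              ENNReal.ofReal ((f y)^2)) := by
          rw [lintegral_lintegral_swap hWprod.aemeasurable]
      _ = ENNReal.ofReal (a*b) * (ENNReal.ofReal (1/b) *
            ∫⁻ y : ℝ, ENNReal.ofReal a⁻¹ * ENNReal.ofReal ((f y)^2)) := by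
          congr 2
          apply lintegral_congr
          intro y
          rw [lintegral_mul_const' _ _ ENNReal.ofReal_ne_top]
          congr 1
          have hsub : ∀ x : ℝ, α - a * x - b * y⁻¹ = (α - b * y⁻¹) - a * x :=
            fun x => sub_right_comm α (a * x) (b * y⁻¹)
          simp_rw [hsub]
          exact aux_affine_lintegral hmeas hnonneg hint hnorm _ ha
      _ = ENNReal.ofReal (a*b) * (ENNReal.ofReal (1/b) *
            (ENNReal.ofReal a⁻¹ * ENNReal.ofReal J)) := by
          rw [lintegral_const_mul' _ _ ENNReal.ofReal_ne_top,
            ← ofReal_integral_eq_lintegral_ofReal hfsq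
              (Filter.Eventually.of_forall fun y => sq_nonneg _)]
      _ = ENNReal.ofReal J := by
          rw [← ENNReal.ofReal_mul (by positivity : (0:ℝ) ≤ a⁻¹),
            ← ENNReal.ofReal_mul (by positivity : (0:ℝ) ≤ 1/b),
            ← ENNReal.ofReal_mul hab]
          congr 1
          field_simp
  rw [integral_eq_lintegral_of_nonneg_ae (Filter.Eventually.of_forall fun x => sq_nonneg _) hms]
  calc (∫⁻ x : ℝ, ENNReal.ofReal
      ((Real.sqrt (a*b) * ∫ y : ℝ, r (α - a * x - b * y⁻¹) * |y|⁻¹ * f y) ^ 2)).toReal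
      ≤ (ENNReal.ofReal J).toReal := ENNReal.toReal_mono ENNReal.ofReal_ne_top htot
    _ = J := ENNReal.toReal_ofReal hJ0

theorem T_operator_L2_contraction
    (r : ℝ → ℝ) (hmeas : Measurable r) (hnonneg : ∀ x, 0 ≤ r x)
    (hint : Integrable r) (hnorm : ∫ x, r x = 1)
    (a b α : ℝ) (ha : 0 < a) (hb : 0 < b)
    (f : ℝ → ℝ) (hf : MeasureTheory.MemLp f 2 (volume : Measure ℝ)) :
    (∫ x : ℝ, (Real.sqrt (a * b) * ∫ y : ℝ, r (α - a * x - b * y⁻¹) * |y|⁻¹ * f y) ^ 2)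
      ≤ ∫ y : ℝ, (f y) ^ 2 := by
  set g := hf.1.mk f with hg
  have hgm : Measurable g := hf.1.stronglyMeasurable_mk.measurable
  have hfg : f =ᵐ[volume] g := hf.1.ae_eq_mk
  have hgf2 : MemLp g 2 (volume : Measure ℝ) := hf.ae_eq hfg
  have h1 : (∫ x : ℝ, (Real.sqrt (a * b) * ∫ y : ℝ, r (α - a * x - b * y⁻¹) * |y|⁻¹ * f y) ^ 2)
      = ∫ x : ℝ, (Real.sqrt (a * b) * ∫ y : ℝ, r (α - a * x - b * y⁻¹) * |y|⁻¹ * g y) ^ 2 := by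
    congr 1
    funext x
    congr 2
    exact integral_congr_ae (hfg.mono fun y hy => by simp only [hy])
  have h2 : (∫ y : ℝ, (f y) ^ 2) = ∫ y : ℝ, (g y) ^ 2 :=
    integral_congr_ae (hfg.mono fun y hy => by simp only [hy])
  rw [h1, h2]
  exact aux_main r hmeas hnonneg hint hnorm a b α ha hb g hgm hgf2
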